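/- Let n ≥ 3 and let i, j ≥ 2 be integers of different parity (one even, one odd). Then the product of ideals M_i(A_n)·M_j(A_n) is NOT contained in M_{i+j}(A_n). -/

import Mathlib

/-- Lower central series of an associative unital algebra `R` over `K`, as `K`-submodules:
`lowerCentral K R 1 = ⊤` and, for `i ≥ 1`, `lowerCentral K R (i+1)` is the `K`-linear span of
the brackets `⁅a, l⁆ = a * l - l * a` with `a : R` and `l ∈ lowerCentral K R i`.
(By convention `lowerCentral K R 0 = ⊤` as well; only indices `i ≥ 1` are used.) -/
def lowerCentral (K : Type*) [CommRing K] (R : Type*) [Ring R] [Algebra K R] : ℕ → Submodule K R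
  | 0 => ⊤
  | 1 => ⊤
  | n + 2 => Submodule.span K
      {x : R | ∃ a : R, ∃ l ∈ lowerCentral K R (n + 1), x = a * l - l * a}

/-- `lcsIdeal K R i` is the two-sided ideal `M_i(R)` of `R` generated by `lowerCentral K R i`,
realized as the `K`-submodule spanned by all products `a * l * b` with `a b : R` and
`l ∈ lowerCentral K R i`.  Products of such ideals are taken using the multiplication of
`Submodule K R` (the span of pairwise products), which agrees with the product of
two-sided ideals. -/
def lcsIdeal (K : Type*) [CommRing K] (R : Type*) [Ring R] [Algebra K R] (i : ℕ) : Submodule K R :=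
  Submodule.span K {x : R | ∃ a b : R, ∃ l ∈ lowerCentral K R i, x = a * l * b}

lemma lowerCentral_succ_succ (K : Type*) [CommRing K] (R : Type*) [Ring R] [Algebra K R]
    (m : ℕ) :
    lowerCentral K R (m + 2) = Submodule.span K
      {x : R | ∃ a : R, ∃ l ∈ lowerCentral K R (m + 1), x = a * l - l * a} := by
  rw [lowerCentral]

lemma lowerCentral_one (K : Type*) [CommRing K] (R : Type*) [Ring R] [Algebra K R] :
    lowerCentral K R 1 = ⊤ := by
  rw [lowerCentral]

noncomputable section Aux

open MonoidAlgebra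

variable {K : Type*} [Field K] {n : ℕ}

/-- The "doubling" homomorphism into the monoid algebra of the product monoid,
sending each generator `x` to `x ⊗ 1 + 1 ⊗ x`. -/
def delta (K : Type*) [Field K] (n : ℕ) :
    FreeAlgebra K (Fin n) →ₐ[K]
      MonoidAlgebra K (FreeMonoid (Fin n) × FreeMonoid (Fin n)) :=
  FreeAlgebra.lift K fun k =>
    (MonoidAlgebra.single (FreeMonoid.of k, 1) 1 :
        MonoidAlgebra K (FreeMonoid (Fin n) × FreeMonoid (Fin n)))
      + MonoidAlgebra.single (1, FreeMonoid.of k) 1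

/-- total length of a pair of words -/
def lenP (m : FreeMonoid (Fin n) × FreeMonoid (Fin n)) : ℕ := m.1.length + m.2.length

lemma lenP_mul (m m' : FreeMonoid (Fin n) × FreeMonoid (Fin n)) :
    lenP (m * m') = lenP m + lenP m' := by
  simp only [lenP, Prod.fst_mul, Prod.snd_mul, FreeMonoid.length_mul]
  omega

lemma lenP_pair (p q : FreeMonoid (Fin n)) : lenP (p, q) = p.length + q.length := rfl

lemma lenP_eq_one_cases {m : FreeMonoid (Fin n) × FreeMonoid (Fin n)} (h : lenP m = 1) :
    m.1 = 1 ∨ m.2 = 1 := by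
  obtain ⟨p, q⟩ := m
  rw [lenP_pair] at h
  rcases Nat.eq_zero_or_pos p.length with h2 | h2
  · exact Or.inl (FreeMonoid.length_eq_zero.mp h2)
  · have h3 : q.length = 0 := by omega
    exact Or.inr (FreeMonoid.length_eq_zero.mp h3)

lemma lenP_eq_zero {m : FreeMonoid (Fin n) × FreeMonoid (Fin n)} (h : lenP m = 0) :
    m = 1 := by
  obtain ⟨p, q⟩ := m
  rw [lenP_pair] at h
  have hp : p.length = 0 := by omega
  have hq : q.length = 0 := by omega
  rw [FreeMonoid.length_eq_zero] at hp hq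
  rw [Prod.ext_iff]
  exact ⟨hp, hq⟩

/-- Submodule of the product monoid algebra: spanned by singles of total length `> d`,
together with singles of total length `= d` whose first or second word is empty. -/
def VV (K : Type*) [Field K] (n : ℕ) (d : ℕ) :
    Submodule K (MonoidAlgebra K (FreeMonoid (Fin n) × FreeMonoid (Fin n))) :=
  Submodule.span K {x | ∃ m : FreeMonoid (Fin n) × FreeMonoid (Fin n), ∃ c : K,
    x = MonoidAlgebra.single m c ∧ d ≤ lenP m ∧ (lenP m = d → m.1 = 1 ∨ m.2 = 1)}

lemma single_mem_VV {d : ℕ} {m : FreeMonoid (Fin n) × FreeMonoid (Fin n)} {c : K}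
    (h1 : d ≤ lenP m) (h2 : lenP m = d → m.1 = 1 ∨ m.2 = 1) :
    MonoidAlgebra.single m c ∈ VV K n d :=
  Submodule.subset_span ⟨m, c, rfl, h1, h2⟩

/-- key commutator lemma for singles -/
lemma comm_single_single_mem (d : ℕ)
    (m m' : FreeMonoid (Fin n) × FreeMonoid (Fin n)) (α β : K)
    (h1 : lenP m' = 0 ∨ (d ≤ lenP m' ∧ (lenP m' = d → m'.1 = 1 ∨ m'.2 = 1))) :
    MonoidAlgebra.single m α * MonoidAlgebra.single m' β
      - MonoidAlgebra.single m' β * MonoidAlgebra.single m α ∈ VV K n (d + 1) := by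
  rw [MonoidAlgebra.single_mul_single, MonoidAlgebra.single_mul_single]
  rcases h1 with h0 | ⟨hge, hcond⟩
  · have hm' : m' = 1 := lenP_eq_zero h0
    subst hm'
    simpa [mul_comm β α] using (VV K n (d + 1)).zero_mem
  · by_cases ht : lenP m = 0
    · have hm : m = 1 := lenP_eq_zero ht
      subst hm
      simpa [mul_comm β α] using (VV K n (d + 1)).zero_mem
    · by_cases hbig : d + 1 < lenP m + lenP m'
      · refine Submodule.sub_mem _ ?_ ?_ <;>
        · apply single_mem_VV
          · rw [lenP_mul]; omega
          · intro h; rw [lenP_mul] at h; omega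
      · -- here lenP m = 1 and lenP m' = d
        have hm1 : lenP m = 1 := by omega
        have hm'd : lenP m' = d := by omega
        have hpq : m.1 = 1 ∨ m.2 = 1 := lenP_eq_one_cases hm1
        have hpq' : m'.1 = 1 ∨ m'.2 = 1 := hcond hm'd
        obtain ⟨p, q⟩ := m
        obtain ⟨p', q'⟩ := m'
        dsimp only at hpq hpq'
        rcases hpq' with hp' | hq' <;> rcases hpq with hp | hq
        · -- p' = 1, p = 1
          subst hp'; subst hp
          refine Submodule.sub_mem _ ?_ ?_ <;>
          · apply single_mem_VV
            · rw [lenP_mul]; omega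
            · intro _; left; simp [Prod.fst_mul]
        · -- p' = 1, q = 1 : (p,1) and (1,q') commute
          subst hp'; subst hq
          have hc : ((p, (1 : FreeMonoid (Fin n))) * ((1 : FreeMonoid (Fin n)), q'))
              = (((1 : FreeMonoid (Fin n)), q') * (p, (1 : FreeMonoid (Fin n)))) := by
            simp [Prod.ext_iff]
          rw [hc, mul_comm α β]
          simpa using (VV K n (d + 1)).zero_mem
        · -- q' = 1, p = 1
          subst hq'; subst hp
          have hc : (((1 : FreeMonoid (Fin n)), q) * (p', (1 : FreeMonoid (Fin n))))
              = ((p', (1 : FreeMonoid (Fin n))) * ((1 : FreeMonoid (Fin n)), q)) := by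
            simp [Prod.ext_iff]
          rw [hc, mul_comm α β]
          simpa using (VV K n (d + 1)).zero_mem
        · -- q' = 1, q = 1
          subst hq'; subst hq
          refine Submodule.sub_mem _ ?_ ?_ <;>
          · apply single_mem_VV
            · rw [lenP_mul]; omega
            · intro _; right; simp [Prod.snd_mul]

lemma comm_mem_VV_two (z z' : MonoidAlgebra K (FreeMonoid (Fin n) × FreeMonoid (Fin n))) :
    z * z' - z' * z ∈ VV K n 2 := by
  induction z' using MonoidAlgebra.induction_on with
  | add f g hf hg =>
    have h : z * (f + g) - (f + g) * z = (z * f - f * z) + (z * g - g * z) := by noncomm_ring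
    rw [h]
    exact Submodule.add_mem _ hf hg
  | smul r f hf =>
    have h : z * (r • f) - (r • f) * z = r • (z * f - f * z) := by
      rw [mul_smul_comm, smul_mul_assoc, smul_sub]
    rw [h]
    exact Submodule.smul_mem _ _ hf
  | of m' =>
    induction z using MonoidAlgebra.induction_on with
    | add f g hf hg =>
      have h : (f + g) * MonoidAlgebra.of K _ m' - MonoidAlgebra.of K _ m' * (f + g)
          = (f * MonoidAlgebra.of K _ m' - MonoidAlgebra.of K _ m' * f)
            + (g * MonoidAlgebra.of K _ m' - MonoidAlgebra.of K _ m' * g) := by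
        noncomm_ring
      rw [h]
      exact Submodule.add_mem _ hf hg
    | smul r f hf =>
      have h : (r • f) * MonoidAlgebra.of K _ m' - MonoidAlgebra.of K _ m' * (r • f)
          = r • (f * MonoidAlgebra.of K _ m' - MonoidAlgebra.of K _ m' * f) := by
        rw [mul_smul_comm, smul_mul_assoc, smul_sub]
      rw [h]
      exact Submodule.smul_mem _ _ hf
    | of m =>
      rw [MonoidAlgebra.of_apply, MonoidAlgebra.of_apply]
      refine comm_single_single_mem 1 m m' 1 1 ?_
      rcases Nat.eq_zero_or_pos (lenP m') with h | h
      · exact Or.inl h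
      · exact Or.inr ⟨h, fun h1 => lenP_eq_one_cases h1⟩

lemma comm_mem_VV_succ (d : ℕ)
    (z x : MonoidAlgebra K (FreeMonoid (Fin n) × FreeMonoid (Fin n)))
    (hx : x ∈ VV K n d) :
    z * x - x * z ∈ VV K n (d + 1) := by
  induction hx using Submodule.span_induction with
  | mem x hxmem =>
    obtain ⟨m', c, rfl, hge, hcond⟩ := hxmem
    induction z using MonoidAlgebra.induction_on with
    | add f g hf hg =>
      have h : (f + g) * MonoidAlgebra.single m' c - MonoidAlgebra.single m' c * (f + g)
          = (f * MonoidAlgebra.single m' c - MonoidAlgebra.single m' c * f)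
            + (g * MonoidAlgebra.single m' c - MonoidAlgebra.single m' c * g) := by
        noncomm_ring
      rw [h]
      exact Submodule.add_mem _ hf hg
    | smul r f hf =>
      have h : (r • f) * MonoidAlgebra.single m' c - MonoidAlgebra.single m' c * (r • f)
          = r • (f * MonoidAlgebra.single m' c - MonoidAlgebra.single m' c * f) := by
        rw [mul_smul_comm, smul_mul_assoc, smul_sub]
      rw [h]
      exact Submodule.smul_mem _ _ hf
    | of m =>
      rw [MonoidAlgebra.of_apply]
      exact comm_single_single_mem d m m' 1 c (Or.inr ⟨hge, hcond⟩)
  | zero => simpa using (VV K n (d + 1)).zero_mem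
  | add x y _ _ hx hy =>
    have : z * (x + y) - (x + y) * z = (z * x - x * z) + (z * y - y * z) := by noncomm_ring
    rw [this]
    exact Submodule.add_mem _ hx hy
  | smul c x _ hx =>
    have : z * (c • x) - (c • x) * z = c • (z * x - x * z) := by
      rw [mul_smul_comm, smul_mul_assoc, ← smul_sub]
    rw [this]
    exact Submodule.smul_mem _ _ hx

lemma mul_mem_VV (d : ℕ)
    (x : MonoidAlgebra K (FreeMonoid (Fin n) × FreeMonoid (Fin n)))
    (hx : x ∈ VV K n d)
    (z z' : MonoidAlgebra K (FreeMonoid (Fin n) × FreeMonoid (Fin n))) :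
    z * x * z' ∈ VV K n d := by
  induction hx using Submodule.span_induction with
  | mem x hxmem =>
    obtain ⟨m', c, rfl, hge, hcond⟩ := hxmem
    induction z using MonoidAlgebra.induction_on with
    | add f g hf hg =>
      have h : (f + g) * MonoidAlgebra.single m' c * z'
          = f * MonoidAlgebra.single m' c * z' + g * MonoidAlgebra.single m' c * z' := by
        noncomm_ring
      rw [h]
      exact Submodule.add_mem _ hf hg
    | smul r f hf =>
      have h : (r • f) * MonoidAlgebra.single m' c * z'
          = r • (f * MonoidAlgebra.single m' c * z') := by
        rw [smul_mul_assoc, smul_mul_assoc]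
      rw [h]
      exact Submodule.smul_mem _ _ hf
    | of m =>
      induction z' using MonoidAlgebra.induction_on with
      | add f g hf hg =>
        have h : MonoidAlgebra.of K _ m * MonoidAlgebra.single m' c * (f + g)
            = MonoidAlgebra.of K _ m * MonoidAlgebra.single m' c * f
              + MonoidAlgebra.of K _ m * MonoidAlgebra.single m' c * g := by
          noncomm_ring
        rw [h]
        exact Submodule.add_mem _ hf hg
      | smul r f hf =>
        have h : MonoidAlgebra.of K _ m * MonoidAlgebra.single m' c * (r • f)
            = r • (MonoidAlgebra.of K _ m * MonoidAlgebra.single m' c * f) := by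
          rw [mul_smul_comm]
        rw [h]
        exact Submodule.smul_mem _ _ hf
      | of m'' =>
        rw [MonoidAlgebra.of_apply, MonoidAlgebra.of_apply,
          MonoidAlgebra.single_mul_single, MonoidAlgebra.single_mul_single]
        apply single_mem_VV
        · rw [lenP_mul, lenP_mul]; omega
        · intro h
          rw [lenP_mul, lenP_mul] at h
          have hm : lenP m = 0 := by omega
          have hm'' : lenP m'' = 0 := by omega
          have h1 : m = 1 := lenP_eq_zero hm
          have h2 : m'' = 1 := lenP_eq_zero hm''
          subst h1; subst h2
          rw [one_mul, mul_one]
          exact hcond (by omega)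
  | zero => simpa using (VV K n d).zero_mem
  | add x y _ _ hx hy =>
    have : z * (x + y) * z' = z * x * z' + z * y * z' := by noncomm_ring
    rw [this]
    exact Submodule.add_mem _ hx hy
  | smul c x _ hx =>
    have : z * (c • x) * z' = c • (z * x * z') := by
      rw [mul_smul_comm, smul_mul_assoc]
    rw [this]
    exact Submodule.smul_mem _ _ hx

lemma delta_lowerCentral (e : ℕ) :
    ∀ l ∈ lowerCentral K (FreeAlgebra K (Fin n)) (e + 2), delta K n l ∈ VV K n (e + 2) := by
  induction e with
  | zero =>
    intro l hl
    rw [lowerCentral_succ_succ] at hl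
    induction hl using Submodule.span_induction with
    | mem x hxmem =>
      obtain ⟨a, l', _, rfl⟩ := hxmem
      rw [map_sub, map_mul, map_mul]
      exact comm_mem_VV_two _ _
    | zero => simpa using (VV K n 2).zero_mem
    | add x y _ _ hx hy => rw [map_add]; exact Submodule.add_mem _ hx hy
    | smul c x _ hx => rw [map_smul]; exact Submodule.smul_mem _ _ hx
  | succ e ih =>
    intro l hl
    rw [lowerCentral_succ_succ] at hl
    induction hl using Submodule.span_induction with
    | mem x hxmem =>
      obtain ⟨a, l', hl', rfl⟩ := hxmem
      rw [map_sub, map_mul, map_mul]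
      exact comm_mem_VV_succ (e + 2) _ _ (ih l' hl')
    | zero => simpa using (VV K n (e + 3)).zero_mem
    | add x y _ _ hx hy => rw [map_add]; exact Submodule.add_mem _ hx hy
    | smul c x _ hx => rw [map_smul]; exact Submodule.smul_mem _ _ hx

lemma delta_lcsIdeal (e : ℕ) (P : FreeAlgebra K (Fin n))
    (hP : P ∈ lcsIdeal K (FreeAlgebra K (Fin n)) (e + 2)) :
    delta K n P ∈ VV K n (e + 2) := by
  induction hP using Submodule.span_induction with
  | mem x hxmem =>
    obtain ⟨a, b, l, hl, rfl⟩ := hxmem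
    rw [map_mul, map_mul]
    exact mul_mem_VV _ _ (delta_lowerCentral e l hl) _ _
  | zero => simpa using (VV K n (e + 2)).zero_mem
  | add x y _ _ hx hy => rw [map_add]; exact Submodule.add_mem _ hx hy
  | smul c x _ hx => rw [map_smul]; exact Submodule.smul_mem _ _ hx

lemma coeff_VV (d : ℕ) {u v : FreeMonoid (Fin n)} (hu : u ≠ 1) (hv : v ≠ 1)
    (hlen : u.length + v.length = d)
    {x : MonoidAlgebra K (FreeMonoid (Fin n) × FreeMonoid (Fin n))}
    (hx : x ∈ VV K n d) : x.coeff (u, v) = 0 := by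
  induction hx using Submodule.span_induction with
  | mem x hxmem =>
    obtain ⟨m, c, rfl, hge, hcond⟩ := hxmem
    rcases eq_or_ne m (u, v) with h | h
    · subst h
      have : lenP (u, v) = d := hlen
      rcases hcond this with h1 | h1
      · exact absurd h1 hu
      · exact absurd h1 hv
    · exact Finsupp.single_eq_of_ne' h
  | zero => simp
  | add x y _ _ hx hy => rw [MonoidAlgebra.coeff_add, Finsupp.add_apply, hx, hy, add_zero]
  | smul c x _ hx => rw [MonoidAlgebra.coeff_smul_apply, hx, smul_zero]

/-- left-normed bracket `[a,[a,...,[a,b]]]` with `k` copies of `a` -/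
def Nbr (K : Type*) [Field K] {n : ℕ} (a b : Fin n) : ℕ → FreeAlgebra K (Fin n)
  | 0 => FreeAlgebra.ι K b
  | k + 1 => FreeAlgebra.ι K a * Nbr K a b k - Nbr K a b k * FreeAlgebra.ι K a

lemma Nbr_mem_lowerCentral (a b : Fin n) (k : ℕ) :
    Nbr K a b k ∈ lowerCentral K (FreeAlgebra K (Fin n)) (k + 1) := by
  induction k with
  | zero => rw [lowerCentral_one]; trivial
  | succ k ih =>
    rw [lowerCentral_succ_succ]
    exact Submodule.subset_span ⟨FreeAlgebra.ι K a, Nbr K a b k, ih, rfl⟩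

/-- the analogous bracket in the monoid algebra picture -/
def Wbr (K : Type*) [Field K] {n : ℕ} (a b : Fin n) : ℕ → MonoidAlgebra K (FreeMonoid (Fin n))
  | 0 => MonoidAlgebra.single (FreeMonoid.of b) 1
  | k + 1 => MonoidAlgebra.single (FreeMonoid.of a) 1 * Wbr K a b k
      - Wbr K a b k * MonoidAlgebra.single (FreeMonoid.of a) 1

def embL (K : Type*) [Field K] (n : ℕ) :
    MonoidAlgebra K (FreeMonoid (Fin n)) →ₐ[K]
      MonoidAlgebra K (FreeMonoid (Fin n) × FreeMonoid (Fin n)) :=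
  MonoidAlgebra.mapDomainAlgHom K K (MonoidHom.inl (FreeMonoid (Fin n)) (FreeMonoid (Fin n)))

def embR (K : Type*) [Field K] (n : ℕ) :
    MonoidAlgebra K (FreeMonoid (Fin n)) →ₐ[K]
      MonoidAlgebra K (FreeMonoid (Fin n) × FreeMonoid (Fin n)) :=
  MonoidAlgebra.mapDomainAlgHom K K (MonoidHom.inr (FreeMonoid (Fin n)) (FreeMonoid (Fin n)))

lemma embL_single (m : FreeMonoid (Fin n)) (c : K) :
    embL K n (MonoidAlgebra.single m c) = MonoidAlgebra.single (m, 1) c := by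
  simp [embL, MonoidAlgebra.mapDomainAlgHom, MonoidAlgebra.mapDomainRingHom,
    Finsupp.mapDomain_single]

lemma embR_single (m : FreeMonoid (Fin n)) (c : K) :
    embR K n (MonoidAlgebra.single m c) = MonoidAlgebra.single (1, m) c := by
  simp [embR, MonoidAlgebra.mapDomainAlgHom, MonoidAlgebra.mapDomainRingHom,
    Finsupp.mapDomain_single]

lemma embL_apply_of_ne (f : MonoidAlgebra K (FreeMonoid (Fin n)))
    {p q : FreeMonoid (Fin n)} (hq : q ≠ 1) : (embL K n f).coeff (p, q) = 0 := by
  have : (embL K n f).coeff = Finsupp.mapDomain (MonoidHom.inl (FreeMonoid (Fin n)) (FreeMonoid (Fin n))) f.coeff := by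
    rfl
  rw [this]
  apply Finsupp.mapDomain_notin_range
  rintro ⟨m, hm⟩
  exact hq (congrArg Prod.snd hm).symm

lemma embR_apply_of_ne (f : MonoidAlgebra K (FreeMonoid (Fin n)))
    {p q : FreeMonoid (Fin n)} (hp : p ≠ 1) : (embR K n f).coeff (p, q) = 0 := by
  have : (embR K n f).coeff = Finsupp.mapDomain (MonoidHom.inr (FreeMonoid (Fin n)) (FreeMonoid (Fin n))) f.coeff := by
    rfl
  rw [this]
  apply Finsupp.mapDomain_notin_range
  rintro ⟨m, hm⟩
  exact hp (congrArg Prod.fst hm).symm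

lemma embLR_comm (f g : MonoidAlgebra K (FreeMonoid (Fin n))) :
    embL K n f * embR K n g = embR K n g * embL K n f := by
  induction f using MonoidAlgebra.induction_on with
  | add f₁ f₂ h1 h2 => rw [map_add, add_mul, mul_add, h1, h2]
  | smul r f hf => rw [map_smul, smul_mul_assoc, mul_smul_comm, hf]
  | of m =>
    induction g using MonoidAlgebra.induction_on with
    | add g₁ g₂ h1 h2 => rw [map_add, add_mul, mul_add, h1, h2]
    | smul r g hg => rw [map_smul, smul_mul_assoc, mul_smul_comm, hg]
    | of m' =>
      rw [MonoidAlgebra.of_apply, MonoidAlgebra.of_apply, embL_single, embR_single,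
        MonoidAlgebra.single_mul_single, MonoidAlgebra.single_mul_single]
      have h : ((m, (1 : FreeMonoid (Fin n))) * ((1 : FreeMonoid (Fin n)), m'))
          = (((1 : FreeMonoid (Fin n)), m') * (m, (1 : FreeMonoid (Fin n)))) := by
        simp [Prod.ext_iff]
      rw [h]

lemma mul_apply_LR (f g : MonoidAlgebra K (FreeMonoid (Fin n))) (u v : FreeMonoid (Fin n)) :
    (embL K n f * embR K n g).coeff (u, v) = f.coeff u * g.coeff v := by
  classical
  induction f using MonoidAlgebra.induction_on with
  | add f₁ f₂ h1 h2 =>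
    rw [map_add, add_mul, MonoidAlgebra.coeff_add, Finsupp.add_apply, h1, h2, MonoidAlgebra.coeff_add,
      Finsupp.add_apply, add_mul]
  | smul r f hf =>
    rw [map_smul, smul_mul_assoc, MonoidAlgebra.coeff_smul_apply, hf, MonoidAlgebra.coeff_smul_apply,
      smul_eq_mul, smul_eq_mul, mul_assoc]
  | of m =>
    induction g using MonoidAlgebra.induction_on with
    | add g₁ g₂ h1 h2 =>
      rw [map_add, mul_add, MonoidAlgebra.coeff_add, Finsupp.add_apply, h1, h2,
          MonoidAlgebra.coeff_add, Finsupp.add_apply, mul_add]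
    | smul r g hg =>
      rw [map_smul, mul_smul_comm, MonoidAlgebra.coeff_smul_apply, hg, MonoidAlgebra.coeff_smul_apply,
        smul_eq_mul, smul_eq_mul, mul_left_comm]
    | of m' =>
      rw [MonoidAlgebra.of_apply, MonoidAlgebra.of_apply, embL_single, embR_single,
        MonoidAlgebra.single_mul_single]
      have hpt : ((m, (1 : FreeMonoid (Fin n))) * ((1 : FreeMonoid (Fin n)), m')) = (m, m') := by
        simp [Prod.ext_iff]
      rw [hpt]
      simp only [MonoidAlgebra.coeff_single]
      rw [Finsupp.single_apply, Finsupp.single_apply, Finsupp.single_apply]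
      by_cases h1 : m = u <;> by_cases h2 : m' = v <;>
        simp [h1, h2, Prod.ext_iff]

lemma delta_iota (a : Fin n) :
    delta K n (FreeAlgebra.ι K a)
      = embL K n (MonoidAlgebra.single (FreeMonoid.of a) 1)
        + embR K n (MonoidAlgebra.single (FreeMonoid.of a) 1) := by
  rw [delta, FreeAlgebra.lift_ι_apply, embL_single, embR_single]

lemma delta_Nbr (a b : Fin n) (k : ℕ) :
    delta K n (Nbr K a b k) = embL K n (Wbr K a b k) + embR K n (Wbr K a b k) := by
  induction k with
  | zero =>
    rw [Nbr, Wbr, delta_iota]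
  | succ k ih =>
    rw [Nbr, Wbr, map_sub, map_mul, map_mul, ih, delta_iota]
    set La := embL K n (MonoidAlgebra.single (FreeMonoid.of a) 1) with hLa
    set Ra := embR K n (MonoidAlgebra.single (FreeMonoid.of a) 1) with hRa
    set Lw := embL K n (Wbr K a b k) with hLw
    set Rw := embR K n (Wbr K a b k) with hRw
    have c1 : La * Rw = Rw * La := embLR_comm _ _
    have c2' : Lw * Ra = Ra * Lw := by
      rw [hLw, hRa]; exact embLR_comm _ _
    have expand : (La + Ra) * (Lw + Rw) - (Lw + Rw) * (La + Ra)
        = (La * Lw - Lw * La) + (Ra * Rw - Rw * Ra)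
          + ((La * Rw - Rw * La) + (Ra * Lw - Lw * Ra)) := by noncomm_ring
    rw [expand, c1, c2', sub_self, sub_self, add_zero, add_zero]
    simp only [map_sub, map_mul]
    rfl

/-- the word `a^k b` -/
def wrd {n : ℕ} (a b : Fin n) (k : ℕ) : FreeMonoid (Fin n) :=
  FreeMonoid.ofList (List.replicate k a ++ [b])

lemma toList_wrd (a b : Fin n) (k : ℕ) :
    FreeMonoid.toList (wrd a b k) = List.replicate k a ++ [b] := rfl

lemma wrd_succ (a b : Fin n) (k : ℕ) :
    FreeMonoid.of a * wrd a b k = wrd a b (k + 1) := by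
  apply FreeMonoid.toList.injective
  rw [FreeMonoid.toList_mul, toList_wrd, toList_wrd, FreeMonoid.toList_of]
  simp [List.replicate_succ]

lemma wrd_length (a b : Fin n) (k : ℕ) : (wrd a b k).length = k + 1 := by
  have : (wrd a b k).length = (FreeMonoid.toList (wrd a b k)).length := rfl
  rw [this, toList_wrd]
  simp

lemma wrd_ne_one (a b : Fin n) (k : ℕ) : wrd a b k ≠ 1 := by
  intro h
  have := wrd_length a b k
  rw [h] at this
  simp [FreeMonoid.length_one] at this

lemma Wbr_apply_top (a b : Fin n) (hab : a ≠ b) (k : ℕ) :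
    (Wbr K a b k).coeff (wrd a b k) = 1 := by
  induction k with
  | zero =>
    rw [Wbr]
    have : wrd a b 0 = FreeMonoid.of b := by
      apply FreeMonoid.toList.injective
      rw [toList_wrd, FreeMonoid.toList_of]
      simp
    rw [this]
    exact Finsupp.single_eq_same
  | succ k ih =>
    rw [Wbr, MonoidAlgebra.coeff_sub, Finsupp.sub_apply]
    have h1 : (MonoidAlgebra.single (FreeMonoid.of a) (1 : K) * Wbr K a b k).coeff (wrd a b (k + 1))
        = 1 * (Wbr K a b k).coeff (wrd a b k) := by
      apply MonoidAlgebra.coeff_single_mul_eq_mul_coeff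
      intro w _
      constructor
      · intro h
        rw [← wrd_succ] at h
        exact mul_left_cancel h
      · intro h; rw [h, wrd_succ]
    have h2 : (Wbr K a b k * MonoidAlgebra.single (FreeMonoid.of a) (1 : K)).coeff (wrd a b (k + 1))
        = 0 := by
      apply MonoidAlgebra.mul_single_apply_of_not_exists_mul
      rintro ⟨w, hw⟩
      have := congrArg FreeMonoid.toList hw
      rw [toList_wrd, FreeMonoid.toList_mul, FreeMonoid.toList_of] at this
      have h3 := congrArg List.getLast? this
      rw [List.getLast?_concat] at h3
      rw [List.getLast?_concat] at h3
      exact hab (Option.some_injective _ h3).symm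
    rw [h1, h2, ih, one_mul, sub_zero]

lemma Wbr_apply_eq_zero (a b : Fin n) (k : ℕ) :
    ∀ w : FreeMonoid (Fin n), (∃ c ∈ FreeMonoid.toList w, c ≠ a ∧ c ≠ b) →
      (Wbr K a b k).coeff w = 0 := by
  induction k with
  | zero =>
    intro w hw
    rw [Wbr]
    rcases eq_or_ne (FreeMonoid.of b) w with h | h
    · exfalso
      obtain ⟨c, hc, _, hcb⟩ := hw
      rw [← h, FreeMonoid.toList_of, List.mem_singleton] at hc
      exact hcb hc
    · exact Finsupp.single_eq_of_ne' h
  | succ k ih =>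
    intro w hw
    obtain ⟨c, hc, hca, hcb⟩ := hw
    rw [Wbr, MonoidAlgebra.coeff_sub, Finsupp.sub_apply]
    have h1 : (MonoidAlgebra.single (FreeMonoid.of a) (1 : K) * Wbr K a b k).coeff w = 0 := by
      by_cases hr : ∃ w', w = FreeMonoid.of a * w'
      · obtain ⟨w', rfl⟩ := hr
        have := MonoidAlgebra.coeff_single_mul_eq_mul_coeff (x := Wbr K a b k)
          (r := (1 : K)) (m := FreeMonoid.of a) (m₁ := FreeMonoid.of a * w') w'
          (fun c' _ => ⟨fun h => mul_left_cancel h, fun h => by rw [h]⟩)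
        rw [this, one_mul]
        apply ih
        refine ⟨c, ?_, hca, hcb⟩
        rw [FreeMonoid.toList_mul, FreeMonoid.toList_of] at hc
        rcases List.mem_append.mp hc with h | h
        · rw [List.mem_singleton] at h; exact absurd h hca
        · exact h
      · exact MonoidAlgebra.single_mul_apply_of_not_exists_mul _ _ hr
    have h2 : (Wbr K a b k * MonoidAlgebra.single (FreeMonoid.of a) (1 : K)).coeff w = 0 := by
      by_cases hr : ∃ w', w = w' * FreeMonoid.of a
      · obtain ⟨w', rfl⟩ := hr
        have := MonoidAlgebra.coeff_mul_single_eq_coeff_mul (x := Wbr K a b k)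
          (r := (1 : K)) (m := FreeMonoid.of a) (m₁ := w' * FreeMonoid.of a) w'
          (fun c' _ => ⟨fun h => mul_right_cancel h, fun h => by rw [h]⟩)
        rw [this, mul_one]
        apply ih
        refine ⟨c, ?_, hca, hcb⟩
        rw [FreeMonoid.toList_mul, FreeMonoid.toList_of] at hc
        rcases List.mem_append.mp hc with h | h
        · exact h
        · rw [List.mem_singleton] at h; exact absurd h hca
      · exact MonoidAlgebra.mul_single_apply_of_not_exists_mul _ _ hr
    rw [h1, h2, sub_zero]

end Aux

/-- Theorem 5.1, different parity: for `n ≥ 3` and `i, j ≥ 2` of different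
parity, `M_i(A_n) · M_j(A_n)` is not contained in `M_{i+j}(A_n)`. -/
theorem not_contained_different_parity
    (K : Type*) [Field K] [CharZero K]
    (n : ℕ) (hn : 3 ≤ n) (i j : ℕ) (hi : 2 ≤ i) (hj : 2 ≤ j)
    (hpar : i % 2 ≠ j % 2) :
    ¬ lcsIdeal K (FreeAlgebra K (Fin n)) i * lcsIdeal K (FreeAlgebra K (Fin n)) j ≤
        lcsIdeal K (FreeAlgebra K (Fin n)) (i + j) := by
  intro hcont
  set a0 : Fin n := ⟨0, by omega⟩ with ha0
  set a1 : Fin n := ⟨1, by omega⟩ with ha1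
  set a2 : Fin n := ⟨2, by omega⟩ with ha2
  have h10 : a1 ≠ a0 := by simp [ha0, ha1, Fin.ext_iff]
  have h20 : a2 ≠ a0 := by simp [ha0, ha2, Fin.ext_iff]
  have h21 : a2 ≠ a1 := by simp [ha1, ha2, Fin.ext_iff]
  set U := Nbr K a1 a0 (i - 1) with hU
  set V := Nbr K a2 a0 (j - 1) with hV
  -- membership of the witness in the product of ideals
  have hUmem : U ∈ lcsIdeal K (FreeAlgebra K (Fin n)) i := by
    have h := Nbr_mem_lowerCentral (K := K) a1 a0 (i - 1)
    rw [Nat.sub_add_cancel (by omega : 1 ≤ i)] at h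
    exact Submodule.subset_span ⟨1, 1, U, h, by rw [one_mul, mul_one]⟩
  have hVmem : V ∈ lcsIdeal K (FreeAlgebra K (Fin n)) j := by
    have h := Nbr_mem_lowerCentral (K := K) a2 a0 (j - 1)
    rw [Nat.sub_add_cancel (by omega : 1 ≤ j)] at h
    exact Submodule.subset_span ⟨1, 1, V, h, by rw [one_mul, mul_one]⟩
  have hProd : U * V ∈ lcsIdeal K (FreeAlgebra K (Fin n)) (i + j) :=
    hcont (Submodule.mul_mem_mul hUmem hVmem)
  -- the test words
  set u := wrd a1 a0 (i - 1) with hu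
  set v := wrd a2 a0 (j - 1) with hv
  have hulen : u.length = i := by rw [hu, wrd_length]; omega
  have hvlen : v.length = j := by rw [hv, wrd_length]; omega
  -- the coefficient of (u,v) in delta (U*V) is zero by membership
  have hzero : (delta K n (U * V)).coeff (u, v) = 0 := by
    obtain ⟨e, he⟩ : ∃ e, i + j = e + 2 := ⟨i + j - 2, by omega⟩
    apply coeff_VV (i + j) (wrd_ne_one a1 a0 (i - 1)) (wrd_ne_one a2 a0 (j - 1))
      (by rw [hulen, hvlen])
    rw [he] at hProd ⊢
    exact delta_lcsIdeal e _ hProd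
  -- but direct computation gives 1
  have hone : (delta K n (U * V)).coeff (u, v) = 1 := by
    rw [map_mul, hU, hV, delta_Nbr, delta_Nbr]
    set wU := Wbr K a1 a0 (i - 1) with hwU
    set wV := Wbr K a2 a0 (j - 1) with hwV
    have hswap : embR K n wU * embL K n wV = embL K n wV * embR K n wU :=
      (embLR_comm _ _).symm
    have hexp : (embL K n wU + embR K n wU) * (embL K n wV + embR K n wV)
        = embL K n (wU * wV) + embR K n (wU * wV)
          + (embL K n wU * embR K n wV + embL K n wV * embR K n wU) := by
      rw [map_mul, map_mul]
      rw [add_mul, mul_add, mul_add, hswap]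
      abel
    rw [hexp]
    simp only [MonoidAlgebra.coeff_add, Finsupp.add_apply]
    rw [embL_apply_of_ne _ (wrd_ne_one a2 a0 (j - 1)),
      embR_apply_of_ne _ (wrd_ne_one a1 a0 (i - 1))]
    rw [mul_apply_LR, mul_apply_LR]
    have hWu : wU.coeff u = 1 := Wbr_apply_top a1 a0 h10 (i - 1)
    have hWv : wV.coeff v = 1 := Wbr_apply_top a2 a0 h20 (j - 1)
    have hWuv : wU.coeff v = 0 := by
      apply Wbr_apply_eq_zero
      refine ⟨a2, ?_, h21, h20⟩
      rw [hv, toList_wrd]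
      apply List.mem_append_left
      rw [List.mem_replicate]
      exact ⟨by omega, rfl⟩
    rw [hWu, hWv, hWuv]
    simp
  rw [hzero] at hone
  exact zero_ne_one hone
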